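/- Let f : ℕ → ℕ be a function whose generating series Σ f(n) Zⁿ is a rational function of the form P(Z)/((1−Z^{n₁})(1−Z^{n₂})⋯(1−Z^{n_k})) with P ∈ ℤ[Z]. Then f is eventually a quasi-polynomial of degree at most k−1; that is, there exist N and periodic functions a₀,…,a_{k−1} : ℕ → ℚ such that f(n) = a_{k−1}(n) n^{k−1} + ⋯ + a₀(n) for all n ≥ N. -/

import Mathlib

/-- step-`L` forward difference operator on rational sequences -/
private def dstep (L : ℕ) (u : ℕ → ℚ) : ℕ → ℚ := fun m => u (m + L) - u m

private lemma dstep_shift (L : ℕ) : ∀ (k : ℕ) (u : ℕ → ℚ) (c t : ℕ),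
    (dstep L)^[k] (fun s => u (s + c)) t = (dstep L)^[k] u (t + c) := by
  intro k
  induction k with
  | zero => intro u c t; simp
  | succ k ih =>
    intro u c t
    rw [Function.iterate_succ_apply, Function.iterate_succ_apply]
    have hd : dstep L (fun s => u (s + c)) = fun s => (dstep L u) (s + c) := by
      funext s
      simp only [dstep]
      rw [show s + L + c = s + c + L by omega]
    rw [hd, ih]

private lemma dstep_scale (L : ℕ) : ∀ (k : ℕ) (u : ℕ → ℚ) (r t : ℕ),
    (dstep 1)^[k] (fun s => u (r + s * L)) t = (dstep L)^[k] u (r + t * L) := by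
  intro k
  induction k with
  | zero => intro u r t; simp
  | succ k ih =>
    intro u r t
    rw [Function.iterate_succ_apply, Function.iterate_succ_apply]
    have hd : dstep 1 (fun s => u (r + s * L)) = fun s => (dstep L u) (r + s * L) := by
      funext s
      simp only [dstep]
      rw [show r + (s + 1) * L = r + s * L + L by ring]
    rw [hd, ih]

private lemma vanish (L : ℕ) : ∀ (k : ℕ) (u : ℕ → ℚ) (R : Polynomial ℚ),
    (PowerSeries.mk u) * (1 - PowerSeries.X ^ L) ^ k = (R : PowerSeries ℚ) →
    ∃ M : ℕ, ∀ m ≥ M, (dstep L)^[k] u m = 0 := by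
  intro k
  induction k with
  | zero =>
    intro u R h
    refine ⟨R.natDegree + 1, fun m hm => ?_⟩
    have h2 := congrArg (PowerSeries.coeff m) h
    simp only [pow_zero, mul_one, PowerSeries.coeff_mk, Polynomial.coeff_coe] at h2
    simpa [h2] using Polynomial.coeff_eq_zero_of_natDegree_lt (p := R) (by omega)
  | succ k ih =>
    intro u R h
    set v : ℕ → ℚ := fun m => u m - if L ≤ m then u (m - L) else 0 with hv
    have hmkv : PowerSeries.mk v = PowerSeries.mk u * (1 - PowerSeries.X ^ L) := by
      ext m
      simp [mul_sub, PowerSeries.coeff_mul_X_pow', v]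
    have h' : PowerSeries.mk v * (1 - PowerSeries.X ^ L) ^ k = (R : PowerSeries ℚ) := by
      rw [hmkv, mul_assoc, ← pow_succ']
      exact h
    obtain ⟨M, hM⟩ := ih v R h'
    refine ⟨M, fun m hm => ?_⟩
    have key : (fun t => v (t + L)) = dstep L u := by
      funext t
      simp [v, dstep, Nat.le_add_left]
    rw [Function.iterate_succ_apply, ← key, dstep_shift]
    exact hM (m + L) (by omega)

private lemma antider : ∀ (n : ℕ) (q : Polynomial ℚ), q.natDegree ≤ n →
    ∃ P : Polynomial ℚ, P.comp (Polynomial.X + 1) - P = q ∧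
      P.natDegree ≤ n + 1 ∧ (q = 0 → P = 0) := by
  intro n
  induction n with
  | zero =>
    intro q hq
    refine ⟨Polynomial.C (q.coeff 0) * Polynomial.X, ?_, ?_, ?_⟩
    · conv_rhs => rw [Polynomial.eq_C_of_natDegree_le_zero hq]
      simp [Polynomial.mul_comp]
      ring
    · exact le_trans (Polynomial.natDegree_C_mul_le _ _) (by simp)
    · intro h0; simp [h0]
  | succ n ih =>
    intro q hq
    by_cases h0 : q.natDegree ≤ n
    · obtain ⟨P, h1, h2, h3⟩ := ih q h0
      exact ⟨P, h1, by omega, h3⟩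
    · have hd : q.natDegree = n + 1 := by omega
      have hq0 : q ≠ 0 := by
        intro hz; rw [hz] at hd; simp at hd
      set d : ℕ := n + 1 with hdd
      set c : ℚ := q.leadingCoeff with hc
      have hcne : c ≠ 0 := Polynomial.leadingCoeff_ne_zero.mpr hq0
      have hdQ : ((d : ℚ) + 1) ≠ 0 := by positivity
      set D : Polynomial ℚ := (Polynomial.X + 1) ^ (d + 1) - Polynomial.X ^ (d + 1) with hD
      set M : Polynomial ℚ := Polynomial.C (c / (d + 1)) * Polynomial.X ^ (d + 1) with hM
      have hΔM : M.comp (Polynomial.X + 1) - M = Polynomial.C (c / (d + 1)) * D := by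
        simp only [hM, hD, Polynomial.mul_comp, Polynomial.C_comp, Polynomial.pow_comp,
          Polynomial.X_comp]
        ring
      have hDcoeff : ∀ i, d ≤ i → D.coeff i = if i = d then (d : ℚ) + 1 else 0 := by
        intro i hi
        simp only [hD, Polynomial.coeff_sub, Polynomial.coeff_X_add_one_pow,
          Polynomial.coeff_X_pow]
        rcases lt_trichotomy i (d + 1) with h | h | h
        · have : i = d := by omega
          subst this
          simp [Nat.choose_succ_self_right]
        · subst h
          simp [Nat.choose_self, show ¬ (d + 1 = d) by omega]
        · rw [Nat.choose_eq_zero_of_lt h]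
          simp [show ¬ (i = d + 1) by omega, show ¬ (i = d) by omega]
      have hq'deg : (q - Polynomial.C (c / (d + 1)) * D).natDegree ≤ n := by
        rw [Polynomial.natDegree_le_iff_coeff_eq_zero]
        intro i hi
        have hdi : d ≤ i := by omega
        rw [Polynomial.coeff_sub, Polynomial.coeff_C_mul, hDcoeff i hdi]
        rcases eq_or_lt_of_le hdi with hEq | hlt
        · rw [← hEq]
          have : q.coeff d = c := by rw [hc, ← hd, Polynomial.coeff_natDegree]
          rw [this]
          simp
          field_simp
          ring
        · rw [Polynomial.coeff_eq_zero_of_natDegree_lt (by omega)]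
          simp [show ¬ (i = d) by omega]
      obtain ⟨P', hP'1, hP'2, _⟩ := ih (q - Polynomial.C (c / (d + 1)) * D) hq'deg
      refine ⟨M + P', ?_, ?_, ?_⟩
      · rw [Polynomial.add_comp]
        linear_combination hΔM + hP'1
      · refine le_trans (Polynomial.natDegree_add_le _ _) (max_le ?_ (by omega))
        refine le_trans (Polynomial.natDegree_C_mul_le _ _) ?_
        simp [hdd]
      · intro hz; exact absurd hz hq0

private lemma poly_of_delta : ∀ (k : ℕ) (g : ℕ → ℚ) (N : ℕ),
    (∀ t ≥ N, (dstep 1)^[k] g t = 0) →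
    ∃ p : Polynomial ℚ, (∀ i, k ≤ i → p.coeff i = 0) ∧ ∀ t ≥ N, g t = p.eval (t : ℚ) := by
  intro k
  induction k with
  | zero =>
    intro g N h
    exact ⟨0, by simp, fun t ht => by simpa using h t ht⟩
  | succ k ih =>
    intro g N h
    obtain ⟨q, hq1, hq2⟩ := ih (dstep 1 g) N (fun t ht => by
      have h2 := h t ht
      rwa [Function.iterate_succ_apply] at h2)
    obtain ⟨P, hP1, hP2, hP3⟩ := antider q.natDegree q le_rfl
    have hPk : ∀ i, k + 1 ≤ i → P.coeff i = 0 := by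
      intro i hi
      by_cases hq0 : q = 0
      · simp [hP3 hq0]
      · have hqlt : q.natDegree < k := by
          by_contra hle
          push_neg at hle
          have h4 := hq1 _ hle
          rw [Polynomial.coeff_natDegree] at h4
          exact hq0 (Polynomial.leadingCoeff_eq_zero.mp h4)
        exact Polynomial.coeff_eq_zero_of_natDegree_lt (by omega)
    refine ⟨P + Polynomial.C (g N - P.eval (N : ℚ)), ?_, ?_⟩
    · intro i hi
      rw [Polynomial.coeff_add, hPk i hi, Polynomial.coeff_C]
      simp [show ¬ (i = 0) by omega]
    · intro t ht
      induction t, ht using Nat.le_induction with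
      | base =>
        simp only [Polynomial.eval_add, Polynomial.eval_C]
        ring
      | succ t ht iht =>
        have hstep : g (t + 1) = g t + q.eval (t : ℚ) := by
          have h2 := hq2 t ht
          simp only [dstep] at h2
          linarith
        have hPt : P.eval ((t : ℚ) + 1) - P.eval (t : ℚ) = q.eval (t : ℚ) := by
          have h3 := congrArg (Polynomial.eval (t : ℚ)) hP1
          simpa [Polynomial.eval_comp] using h3
        push_cast
        rw [hstep, iht]
        simp only [Polynomial.eval_add, Polynomial.eval_C]
        linarith

private lemma eval_sum_range (q : Polynomial ℚ) (k : ℕ)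
    (hq : ∀ i, k ≤ i → q.coeff i = 0) (x : ℚ) :
    q.eval x = ∑ i ∈ Finset.range k, q.coeff i * x ^ i := by
  have h1 : q.eval x = ∑ i ∈ Finset.range (max k (q.natDegree + 1)), q.coeff i * x ^ i :=
    Polynomial.eval_eq_sum_range' (lt_of_lt_of_le (Nat.lt_succ_self _) (le_max_right _ _)) x
  rw [h1]
  exact (Finset.sum_subset (Finset.range_mono (le_max_left _ _)) (fun i _ hi => by
    rw [hq i (by simpa using hi)]
    ring)).symm

/-- if `f : ℕ → ℕ` has generating series `Σ f(n) Zⁿ` equal to a rational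
function `P(Z)/((1−Z^{n₁})⋯(1−Z^{n_k}))` with `P ∈ ℤ[Z]` (stated as an identity of formal
power series), then `f` is eventually a quasi-polynomial of degree at most `k−1`: there are
`N` and periodic functions `a₀,…,a_{k−1} : ℕ → ℚ` with
`f(n) = a_{k−1}(n)·n^{k−1} + ⋯ + a₀(n)` for all `n ≥ N`. -/
theorem eventually_quasiPolynomial_of_rational_gf (f : ℕ → ℕ) (k : ℕ)
    (nn : Fin k → ℕ) (hnn : ∀ i, 0 < nn i) (P : Polynomial ℤ)
    (h : (PowerSeries.mk fun m => (f m : ℤ)) *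
        ∏ i : Fin k, (1 - (PowerSeries.X : PowerSeries ℤ) ^ nn i)
      = (P : PowerSeries ℤ)) :
    ∃ (N : ℕ) (a : Fin k → ℕ → ℚ),
      (∀ i, ∃ p : ℕ, 0 < p ∧ ∀ m, a i (m + p) = a i m) ∧
      ∀ m ≥ N, (f m : ℚ) = ∑ i : Fin k, a i m * (m : ℚ) ^ (i : ℕ) := by
  classical
  set L : ℕ := ∏ i : Fin k, nn i with hLdef
  have hL : 0 < L := Finset.prod_pos (fun i _ => hnn i)
  -- polynomial divisibility
  have hdvd : (∏ i : Fin k, (1 - (Polynomial.X : Polynomial ℤ) ^ nn i))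
      ∣ (1 - Polynomial.X ^ L) ^ k := by
    have h1 : ∀ i : Fin k,
        (1 - (Polynomial.X : Polynomial ℤ) ^ nn i) ∣ (1 - Polynomial.X ^ L) := by
      intro i
      obtain ⟨c, hc⟩ : nn i ∣ L := Finset.dvd_prod_of_mem nn (Finset.mem_univ i)
      have h2 := sub_dvd_pow_sub_pow (1 : Polynomial ℤ) (Polynomial.X ^ nn i) c
      simpa [← pow_mul, ← hc] using h2
    calc (∏ i : Fin k, (1 - (Polynomial.X : Polynomial ℤ) ^ nn i))
        ∣ ∏ _i : Fin k, (1 - (Polynomial.X : Polynomial ℤ) ^ L) :=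
          Finset.prod_dvd_prod_of_dvd _ _ (fun i _ => h1 i)
      _ = (1 - Polynomial.X ^ L) ^ k := by
          rw [Finset.prod_const, Finset.card_univ, Fintype.card_fin]
  obtain ⟨Q, hQ⟩ := hdvd
  -- power series identity over ℤ
  have coe_prod : ((∏ i : Fin k, (1 - Polynomial.X ^ nn i) : Polynomial ℤ) : PowerSeries ℤ)
      = ∏ i : Fin k, (1 - (PowerSeries.X : PowerSeries ℤ) ^ nn i) := by
    rw [← Polynomial.coeToPowerSeries.ringHom_apply, map_prod]
    simp
  have key : (PowerSeries.mk fun m => (f m : ℤ)) * (1 - PowerSeries.X ^ L) ^ k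
      = ((P * Q : Polynomial ℤ) : PowerSeries ℤ) := by
    have e1 : ((1 - Polynomial.X ^ L : Polynomial ℤ) : PowerSeries ℤ)
        = 1 - PowerSeries.X ^ L := by
      push_cast
      ring
    rw [← e1, ← Polynomial.coe_pow, hQ, Polynomial.coe_mul, coe_prod, ← mul_assoc, h,
      ← Polynomial.coe_mul]
  -- move to ℚ
  set u : ℕ → ℚ := fun m => (f m : ℚ) with hu
  set R : Polynomial ℚ := (P * Q).map (Int.castRingHom ℚ) with hR
  have hpoly : ∀ pZ : Polynomial ℤ, PowerSeries.map (Int.castRingHom ℚ) (pZ : PowerSeries ℤ)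
      = ((pZ.map (Int.castRingHom ℚ) : Polynomial ℚ) : PowerSeries ℚ) := by
    intro pZ
    ext n
    simp [Polynomial.coeff_coe, PowerSeries.coeff_map, Polynomial.coeff_map]
  have hm1 : PowerSeries.map (Int.castRingHom ℚ) (PowerSeries.mk fun m => (f m : ℤ))
      = PowerSeries.mk u := by
    ext n
    simp [hu]
  have keyQ : PowerSeries.mk u * (1 - PowerSeries.X ^ L) ^ k = (R : PowerSeries ℚ) := by
    rw [hR, ← hpoly, ← key, map_mul, map_pow, map_sub, map_one, map_pow,
      PowerSeries.map_X, hm1]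
  obtain ⟨Mv, hMv⟩ := vanish L k u R keyQ
  -- per-residue polynomials
  have hres : ∀ r : ℕ, ∃ p : Polynomial ℚ, (∀ i, k ≤ i → p.coeff i = 0) ∧
      ∀ t ≥ Mv, u (r + t * L) = p.eval (t : ℚ) := by
    intro r
    apply poly_of_delta k (fun s => u (r + s * L)) Mv
    intro t ht
    rw [dstep_scale]
    apply hMv
    have h5 : t ≤ t * L := Nat.le_mul_of_pos_right t hL
    omega
  choose p hp1 hp2 using hres
  set qq : ℕ → Polynomial ℚ := fun r =>
    (p r).comp (Polynomial.C ((L : ℚ))⁻¹ * Polynomial.X - Polynomial.C ((r : ℚ) / L)) with hqq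
  have hqcoeff : ∀ r i, k ≤ i → (qq r).coeff i = 0 := by
    intro r i hi
    by_cases h0 : p r = 0
    · simp only [hqq, h0, Polynomial.zero_comp, Polynomial.coeff_zero]
    · have hlt : (p r).natDegree < k := by
        by_contra hle
        push_neg at hle
        have h4 := hp1 r _ hle
        rw [Polynomial.coeff_natDegree] at h4
        exact h0 (Polynomial.leadingCoeff_eq_zero.mp h4)
      apply Polynomial.coeff_eq_zero_of_natDegree_lt
      have hlin : (Polynomial.C ((L : ℚ))⁻¹ * Polynomial.X
          - Polynomial.C ((r : ℚ) / L)).natDegree ≤ 1 := by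
        refine le_trans (Polynomial.natDegree_sub_le _ _) (max_le ?_ (by simp))
        exact le_trans (Polynomial.natDegree_C_mul_le _ _) (by simp)
      calc (qq r).natDegree ≤ (p r).natDegree
            * (Polynomial.C ((L : ℚ))⁻¹ * Polynomial.X
                - Polynomial.C ((r : ℚ) / L)).natDegree := Polynomial.natDegree_comp_le
        _ ≤ (p r).natDegree * 1 := Nat.mul_le_mul_left _ hlin
        _ < i := by omega
  refine ⟨(Mv + 1) * L, fun i m => (qq (m % L)).coeff i, ?_, ?_⟩
  · intro i
    exact ⟨L, hL, fun m => by simp only [Nat.add_mod_right]⟩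
  · intro m hm
    have hLQ : (L : ℚ) ≠ 0 := Nat.cast_ne_zero.mpr (by omega)
    have hmrt : m % L + m / L * L = m := Nat.mod_add_div' m L
    have ht : Mv ≤ m / L := by
      have h6 : Mv + 1 ≤ m / L := (Nat.le_div_iff_mul_le hL).mpr hm
      omega
    have hval : u m = (p (m % L)).eval ((m / L : ℕ) : ℚ) := by
      conv_lhs => rw [← hmrt]
      exact hp2 (m % L) (m / L) ht
    have hm' : (m : ℚ) = (m % L : ℕ) + ((m / L : ℕ) : ℚ) * L := by
      exact_mod_cast congrArg (Nat.cast : ℕ → ℚ) hmrt.symm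
    have heval : (qq (m % L)).eval (m : ℚ) = (p (m % L)).eval ((m / L : ℕ) : ℚ) := by
      simp only [hqq, Polynomial.eval_comp, Polynomial.eval_sub, Polynomial.eval_mul,
        Polynomial.eval_C, Polynomial.eval_X]
      congr 1
      rw [hm']
      field_simp
      ring
    have hsum : (qq (m % L)).eval (m : ℚ)
        = ∑ i ∈ Finset.range k, (qq (m % L)).coeff i * (m : ℚ) ^ i :=
      eval_sum_range _ k (hqcoeff (m % L)) _
    show (f m : ℚ) = ∑ i : Fin k, (qq (m % L)).coeff (i : ℕ) * (m : ℚ) ^ (i : ℕ)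
    rw [Fin.sum_univ_eq_sum_range (fun i => (qq (m % L)).coeff i * (m : ℚ) ^ i) k,
      ← hsum, heval]
    exact hval
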